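/- arXiv:2407.11521 — 3 statements merged into one kernel-verified Lean document; each statement's English description precedes it below -/
import Mathlib

section
/- Let G be a simple graph on vertex set V and let G* be its augmented graph with universal vertex u*. Let M* be a Moore–Penrose pseudoinverse of the Laplacian L_{G*}. Then for all u, v ∈ V, the forest distance in G equals the effective resistance in G*: Ω[u,u] − 2·Ω[u,v] + Ω[v,v] = M*[u,u] − 2·M*[u,v] + M*[v,v], where Ω = (L_G + I)^{−1}. -/
open Matrix BigOperators

/-- `M` is a Moore–Penrose pseudoinverse of `L`. -/
def IsMoorePenrose {n : Type*} [Fintype n] (L M : Matrix n n ℝ) : Prop :=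
  L * M * L = L ∧ M * L * M = M ∧ (L * M)ᵀ = L * M ∧ (M * L)ᵀ = M * L

/-- The augmented graph `G*` of `G`: a new universal vertex `none` is joined
to every vertex of `G`. -/
def augment {V : Type*} (G : SimpleGraph V) : SimpleGraph (Option V) :=
  SimpleGraph.fromRel fun x y =>
    (∃ u v, x = some u ∧ y = some v ∧ G.Adj u v) ∨ x = none ∨ y = none

instance augmentAdjDecidable {V : Type*} [Fintype V] [DecidableEq V]
    (G : SimpleGraph V) [DecidableRel G.Adj] : DecidableRel (augment G).Adj :=
  fun x y => decidable_of_iff' _ (SimpleGraph.fromRel_adj _ x y)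

section Aux

lemma mp_unique {n : Type*} [Fintype n] {L M N : Matrix n n ℝ}
    (hM : IsMoorePenrose L M) (hN : IsMoorePenrose L N) : M = N := by
  obtain ⟨hM1, hM2, hM3, hM4⟩ := hM
  obtain ⟨hN1, hN2, hN3, hN4⟩ := hN
  have e1 : L * M = L * N := by
    calc L * M = (L * N * L) * M := by rw [hN1]
    _ = (L * N) * (L * M) := by simp only [Matrix.mul_assoc]
    _ = (L * N)ᵀ * (L * M)ᵀ := by rw [hN3, hM3]
    _ = ((L * M) * (L * N))ᵀ := (Matrix.transpose_mul (L*M) (L*N)).symm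
    _ = ((L * M * L) * N)ᵀ := by simp only [Matrix.mul_assoc]
    _ = (L * N)ᵀ := by rw [hM1]
    _ = L * N := hN3
  have e2 : M * L = N * L := by
    calc M * L = M * (L * N * L) := by rw [hN1]
    _ = (M * L) * (N * L) := by simp only [Matrix.mul_assoc]
    _ = (M * L)ᵀ * (N * L)ᵀ := by rw [hM4, hN4]
    _ = ((N * L) * (M * L))ᵀ := (Matrix.transpose_mul (N*L) (M*L)).symm
    _ = (N * (L * M * L))ᵀ := by simp only [Matrix.mul_assoc]
    _ = (N * L)ᵀ := by rw [hM1]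
    _ = N * L := hN4
  calc M = M * L * M := hM2.symm
  _ = N * L * M := by rw [e2]
  _ = N * (L * M) := by rw [Matrix.mul_assoc]
  _ = N * (L * N) := by rw [e1]
  _ = N * L * N := by rw [Matrix.mul_assoc]
  _ = N := hN2

lemma mp_symm {n : Type*} [Fintype n] {L M : Matrix n n ℝ}
    (hL : Lᵀ = L) (hM : IsMoorePenrose L M) : Mᵀ = M := by
  obtain ⟨h1, h2, h3, h4⟩ := hM
  have hN : IsMoorePenrose L Mᵀ := by
    refine ⟨?_, ?_, ?_, ?_⟩
    · have := congrArg Matrix.transpose h1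
      simpa [Matrix.transpose_mul, hL, Matrix.mul_assoc] using this
    · have := congrArg Matrix.transpose h2
      simpa [Matrix.transpose_mul, hL, Matrix.mul_assoc] using this
    · calc (L * Mᵀ)ᵀ = M * Lᵀ := by rw [Matrix.transpose_mul, Matrix.transpose_transpose]
      _ = M * L := by rw [hL]
      _ = (M * L)ᵀ := h4.symm
      _ = Lᵀ * Mᵀ := by rw [Matrix.transpose_mul]
      _ = L * Mᵀ := by rw [hL]
    · calc (Mᵀ * L)ᵀ = Lᵀ * M := by rw [Matrix.transpose_mul, Matrix.transpose_transpose]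
      _ = L * M := by rw [hL]
      _ = (L * M)ᵀ := h3.symm
      _ = Mᵀ * Lᵀ := by rw [Matrix.transpose_mul]
      _ = Mᵀ * L := by rw [hL]
  exact mp_unique hN ⟨h1, h2, h3, h4⟩

lemma lap_mulVec {W : Type*} [Fintype W] [DecidableEq W] (H : SimpleGraph W)
    [DecidableRel H.Adj] (y : W → ℝ) (i : W) :
    (H.lapMatrix ℝ *ᵥ y) i = ∑ j, (if H.Adj i j then y i - y j else 0) := by
  rw [SimpleGraph.lapMatrix_mulVec_apply]
  have hdeg : ((H.degree i : ℕ) : ℝ) = ∑ j, (if H.Adj i j then (1 : ℝ) else 0) := by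
    rw [SimpleGraph.degree, SimpleGraph.neighborFinset_eq_filter, Finset.card_filter]
    push_cast
    rfl
  rw [hdeg, SimpleGraph.neighborFinset_eq_filter, Finset.sum_filter,
    Finset.sum_mul, ← Finset.sum_sub_distrib]
  refine Finset.sum_congr rfl fun j _ => ?_
  by_cases h : H.Adj i j <;> simp [h]

variable {V : Type*} [Fintype V] [DecidableEq V] (G : SimpleGraph V) [DecidableRel G.Adj]

lemma augment_adj_some_some (a b : V) :
    (augment G).Adj (some a) (some b) ↔ G.Adj a b := by
  rw [augment, SimpleGraph.fromRel_adj]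
  constructor
  · rintro ⟨hne, (⟨x, y, hx, hy, hxy⟩ | h | h) | (⟨x, y, hx, hy, hxy⟩ | h | h)⟩ <;>
      simp_all <;> exact hxy.symm
  · intro h
    exact ⟨by simpa using h.ne, Or.inl (Or.inl ⟨a, b, rfl, rfl, h⟩)⟩

lemma augment_adj_some_none (a : V) : (augment G).Adj (some a) none := by
  rw [augment, SimpleGraph.fromRel_adj]
  exact ⟨by simp, Or.inl (Or.inr (Or.inr rfl))⟩

lemma augment_adj_none_some (a : V) : (augment G).Adj none (some a) :=
  (augment_adj_some_none G a).symm

end Aux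

theorem forest_distance_eq_augmented_effective_resistance {V : Type*} [Fintype V]
    [DecidableEq V] (G : SimpleGraph V) [DecidableRel G.Adj]
    (M : Matrix (Option V) (Option V) ℝ)
    (hM : IsMoorePenrose ((augment G).lapMatrix ℝ) M) (u v : V) :
    (G.lapMatrix ℝ + 1)⁻¹ u u - 2 * (G.lapMatrix ℝ + 1)⁻¹ u v +
        (G.lapMatrix ℝ + 1)⁻¹ v v =
      M (some u) (some u) - 2 * M (some u) (some v) + M (some v) (some v) := by
  set L' := (augment G).lapMatrix ℝ with hL'def
  set A := G.lapMatrix ℝ + 1 with hAdef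
  -- basic facts about A
  have hAsym : Aᵀ = A := by
    rw [hAdef, Matrix.transpose_add, Matrix.transpose_one, (G.isSymm_lapMatrix (R := ℝ))]
  have hApd : A.PosDef := Matrix.PosDef.posSemidef_add (G.posSemidef_lapMatrix ℝ) Matrix.PosDef.one
  have hdet : IsUnit A.det := (Matrix.isUnit_iff_isUnit_det A).mp hApd.isUnit
  have hAinv : A * A⁻¹ = 1 := Matrix.mul_nonsing_inv _ hdet
  have hΩsym : (A⁻¹)ᵀ = A⁻¹ := by rw [Matrix.transpose_nonsing_inv, hAsym]
  have hL'sym : L'ᵀ = L' := (augment G).isSymm_lapMatrix (R := ℝ)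
  have hMsym : Mᵀ = M := mp_symm hL'sym hM
  -- the vectors
  set e : V → ℝ := Pi.single u 1 - Pi.single v 1 with hedef
  set z : V → ℝ := A⁻¹ *ᵥ e with hzdef
  have hz_apply : ∀ w, z w = A⁻¹ w u - A⁻¹ w v := by
    intro w
    simp [hzdef, hedef, Matrix.mulVec_sub, Matrix.mulVec_single]
  have hAz : A *ᵥ z = e := by
    rw [hzdef, Matrix.mulVec_mulVec, hAinv, Matrix.one_mulVec]
  -- column sums of A⁻¹ via the all-ones vector
  have h1A : (fun _ => (1 : ℝ)) ᵥ* A = fun _ => 1 := by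
    rw [← hAsym, Matrix.vecMul_transpose, hAdef, Matrix.add_mulVec,
      G.lapMatrix_mulVec_const_eq_zero, Matrix.one_mulVec]
    funext w; simp
  have hzsum : ∑ w, z w = 0 := by
    have : ∑ w, z w = (fun _ => (1 : ℝ)) ⬝ᵥ z := by simp [dotProduct]
    rw [this, hzdef, Matrix.dotProduct_mulVec]
    have h1inv : (fun _ => (1 : ℝ)) ᵥ* A⁻¹ = fun _ => 1 := by
      have := congrArg (fun w => w ᵥ* A⁻¹) h1A
      simpa [Matrix.vecMul_vecMul, hAinv, Matrix.vecMul_one] using this.symm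
    rw [h1inv, hedef]
    simp [dotProduct]
  set y : Option V → ℝ := fun o => o.elim 0 z with hydef
  set x : Option V → ℝ := Pi.single (some u) 1 - Pi.single (some v) 1 with hxdef
  have hL'y : L' *ᵥ y = x := by
    funext i
    rw [hL'def, lap_mulVec]
    cases i with
    | none =>
      rw [Fintype.sum_option]
      have h0 : ¬ (augment G).Adj none none := (augment G).irrefl
      simp only [h0, if_false, zero_add]
      have : ∀ w : V, (if (augment G).Adj none (some w) then y none - y (some w) else 0)
          = -(z w) := by
        intro w
        simp [augment_adj_none_some G w, hydef]
      rw [Finset.sum_congr rfl fun w _ => this w, Finset.sum_neg_distrib, hzsum, neg_zero]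
      simp [hxdef, Pi.single_apply]
    | some w =>
      rw [Fintype.sum_option]
      have hwn : (augment G).Adj (some w) none := augment_adj_some_none G w
      have hsum : ∀ t : V, (if (augment G).Adj (some w) (some t) then y (some w) - y (some t) else 0)
          = (if G.Adj w t then z w - z t else 0) := by
        intro t
        simp [augment_adj_some_some G w t, hydef]
      rw [Finset.sum_congr rfl fun t _ => hsum t]
      have hAzw := congrFun hAz w
      rw [hAdef, Matrix.add_mulVec, Matrix.one_mulVec] at hAzw
      have hLz := lap_mulVec G z w
      simp only [Pi.add_apply] at hAzw
      rw [hLz] at hAzw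
      simp only [hwn, if_true, hydef, Option.elim]
      have hx_some : x (some w) = e w := by
        simp [hxdef, hedef, Pi.single_apply]
      rw [hx_some, ← hAzw]
      ring
  -- the quadratic form identity
  have key : x ⬝ᵥ (M *ᵥ x) = y ⬝ᵥ x := by
    calc x ⬝ᵥ (M *ᵥ x) = (L' *ᵥ y) ⬝ᵥ (M *ᵥ (L' *ᵥ y)) := by rw [hL'y]
    _ = (y ᵥ* L') ⬝ᵥ ((M * L') *ᵥ y) := by
        rw [← Matrix.mulVec_transpose, hL'sym, Matrix.mulVec_mulVec]
    _ = y ⬝ᵥ ((L' * (M * L')) *ᵥ y) := by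
        rw [← Matrix.dotProduct_mulVec, Matrix.mulVec_mulVec]
    _ = y ⬝ᵥ (L' *ᵥ y) := by rw [← Matrix.mul_assoc, hM.1]
    _ = y ⬝ᵥ x := by rw [hL'y]
  -- evaluate both sides
  have lhs_eval : y ⬝ᵥ x =
      A⁻¹ u u - 2 * A⁻¹ u v + A⁻¹ v v := by
    rw [hxdef]
    simp only [dotProduct_sub, dotProduct_single, mul_one]
    have : y (some u) - y (some v) = z u - z v := by simp [hydef]
    rw [this, hz_apply, hz_apply]
    have : A⁻¹ v u = A⁻¹ u v := by
      conv_lhs => rw [← hΩsym]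
      rfl
    rw [this]; ring
  have rhs_eval : x ⬝ᵥ (M *ᵥ x) =
      M (some u) (some u) - 2 * M (some u) (some v) + M (some v) (some v) := by
    rw [hxdef]
    simp only [Matrix.mulVec_sub, Matrix.mulVec_single, dotProduct_sub,
      sub_dotProduct, single_dotProduct, mul_one, one_mul, MulOpposite.op_one, one_smul,
      Matrix.col_apply]
    have : M (some v) (some u) = M (some u) (some v) := by
      conv_lhs => rw [← hMsym]
      rfl
    rw [this]; ring
  rw [← hAdef] at *
  rw [lhs_eval.symm.trans (key.symm.trans rhs_eval)]
end

section
/- Let G be a connected simple graph and {a,b} an edge of G that is a bridge, i.e., the graph G − {a,b} obtained by removing the edge is disconnected. Then the effective resistance of this edge equals 1: r_G(a,b) = M[a,a] − 2·M[a,b] + M[b,b] = 1 for any Moore–Penrose pseudoinverse M of L_G. -/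
open Matrix BigOperators

instance deleteEdgeAdjDecidable {V : Type*} [DecidableEq V]
    (G : SimpleGraph V) [DecidableRel G.Adj] (a b : V) :
    DecidableRel (G.deleteEdges {s(a, b)}).Adj := fun x y =>
  decidable_of_iff (G.Adj x y ∧ ¬s(x, y) = s(a, b)) (by simp)

lemma pinv_unique {n : Type*} [Fintype n] (L M N : Matrix n n ℝ)
    (hM : IsMoorePenrose L M) (hN : IsMoorePenrose L N) : M = N := by
  obtain ⟨hM1, hM2, hM3, hM4⟩ := hM
  obtain ⟨hN1, hN2, hN3, hN4⟩ := hN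
  have e1 : M = M * L * N := by
    calc M = M * L * M := hM2.symm
    _ = M * (L * M)ᵀ := by rw [hM3, Matrix.mul_assoc]
    _ = M * Mᵀ * Lᵀ := by rw [Matrix.transpose_mul, ← Matrix.mul_assoc]
    _ = M * Mᵀ * (L * N * L)ᵀ := by rw [hN1]
    _ = M * Mᵀ * (Lᵀ * (L * N)ᵀ) := by
        simp only [Matrix.transpose_mul, Matrix.mul_assoc]
    _ = M * Mᵀ * (Lᵀ * (L * N)) := by rw [hN3]
    _ = M * (L * M)ᵀ * (L * N) := by
        simp only [Matrix.transpose_mul, Matrix.mul_assoc]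
    _ = M * (L * M) * (L * N) := by rw [hM3]
    _ = (M * L * M) * L * N := by simp only [Matrix.mul_assoc]
    _ = M * L * N := by rw [hM2]
  have e2 : N = M * L * N := by
    calc N = N * L * N := hN2.symm
    _ = (N * L)ᵀ * N := by rw [hN4]
    _ = Lᵀ * Nᵀ * N := by rw [Matrix.transpose_mul]
    _ = (L * M * L)ᵀ * Nᵀ * N := by rw [hM1]
    _ = ((M * L)ᵀ * Lᵀ) * Nᵀ * N := by
        simp only [Matrix.transpose_mul, Matrix.mul_assoc]
    _ = (M * L) * (Lᵀ * Nᵀ) * N := by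
        rw [hM4]; simp only [Matrix.mul_assoc]
    _ = (M * L) * (N * L)ᵀ * N := by
        simp only [Matrix.transpose_mul, Matrix.mul_assoc]
    _ = (M * L) * (N * L) * N := by rw [hN4]
    _ = M * L * (N * L * N) := by simp only [Matrix.mul_assoc]
    _ = M * L * N := by rw [hN2]
  rw [e1, ← e2]

theorem bridge_effective_resistance_eq_one {V : Type*} [Fintype V] [DecidableEq V]
    (G : SimpleGraph V) [DecidableRel G.Adj] (hG : G.Connected)
    (a b : V) (hab : G.Adj a b) (hbridge : ¬(G.deleteEdges {s(a, b)}).Connected)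
    (M : Matrix V V ℝ) (hM : IsMoorePenrose (G.lapMatrix ℝ) M) :
    M a a - 2 * M a b + M b b = 1 := by
  classical
  set G' : SimpleGraph V := G.deleteEdges {s(a, b)} with hG'
  set L : Matrix V V ℝ := G.lapMatrix ℝ with hL
  have hLsymm : Lᵀ = L := G.isSymm_lapMatrix (R := ℝ)
  have hne : a ≠ b := hab.ne
  -- M is symmetric
  have hMsymm : Mᵀ = M := by
    have hMT : IsMoorePenrose L Mᵀ := by
      obtain ⟨h1, h2, h3, h4⟩ := hM
      refine ⟨?_, ?_, ?_, ?_⟩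
      · have := congrArg Matrix.transpose h1
        simpa [Matrix.transpose_mul, hLsymm, Matrix.mul_assoc] using this
      · have := congrArg Matrix.transpose h2
        simpa [Matrix.transpose_mul, hLsymm, Matrix.mul_assoc] using this
      · calc (L * Mᵀ)ᵀ = M * Lᵀ := by rw [Matrix.transpose_mul, Matrix.transpose_transpose]
        _ = M * L := by rw [hLsymm]
        _ = (M * L)ᵀ := h4.symm
        _ = Lᵀ * Mᵀ := by rw [Matrix.transpose_mul]
        _ = L * Mᵀ := by rw [hLsymm]
      · calc (Mᵀ * L)ᵀ = Lᵀ * M := by rw [Matrix.transpose_mul, Matrix.transpose_transpose]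
        _ = L * M := by rw [hLsymm]
        _ = (L * M)ᵀ := h3.symm
        _ = Mᵀ * Lᵀ := by rw [Matrix.transpose_mul]
        _ = Mᵀ * L := by rw [hLsymm]
    exact pinv_unique L Mᵀ M hMT hM
  -- a cannot reach b in G'
  have hnr : ¬ G'.Reachable a b := by
    intro hr
    apply hbridge
    have hpre : G'.Preconnected := by
      intro u v
      obtain ⟨w⟩ := hG.preconnected u v
      induction w with
      | nil => exact SimpleGraph.Reachable.refl _
      | @cons p q r hadj wtail ih =>
        refine SimpleGraph.Reachable.trans (u := p) (v := q) ?_ ih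
        by_cases hxy : s(p, q) = s(a, b)
        · rw [Sym2.eq_iff] at hxy
          rcases hxy with ⟨rfl, rfl⟩ | ⟨rfl, rfl⟩
          · exact hr
          · exact hr.symm
        · exact SimpleGraph.Adj.reachable (by
            rw [hG', SimpleGraph.deleteEdges_adj]
            exact ⟨hadj, by simpa using hxy⟩)
    exact (SimpleGraph.connected_iff _).mpr ⟨hpre, hG.nonempty⟩
  -- indicator vector of the component of a
  set x : V → ℝ := fun u => if G'.Reachable a u then 1 else 0 with hx
  have hxa : x a = 1 := by
    have : G'.Reachable a a := SimpleGraph.Reachable.refl a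
    simp [hx, this]
  have hxb : x b = 0 := by simp [hx, hnr]
  -- every G'-edge has equal x values
  have hxadj : ∀ u v, G'.Adj u v → x u = x v := by
    intro u v huv
    simp only [hx]
    by_cases h : G'.Reachable a u
    · rw [if_pos h, if_pos (h.trans huv.reachable)]
    · rw [if_neg h, if_neg (fun h' => h (h'.trans huv.symm.reachable))]
  -- the key computation: L *ᵥ x = e_a - e_b
  have hLx : L *ᵥ x = fun u => (if u = a then (1:ℝ) else 0) - (if u = b then 1 else 0) := by
    funext u
    rw [hL, SimpleGraph.lapMatrix_mulVec_apply]
    have hdeg : (G.degree u : ℝ) * x u = ∑ w ∈ G.neighborFinset u, x u := by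
      rw [Finset.sum_const, SimpleGraph.card_neighborFinset_eq_degree, nsmul_eq_mul]
    rw [hdeg, ← Finset.sum_sub_distrib]
    have hterm : ∀ w ∈ G.neighborFinset u, x u - x w =
        if (u = a ∧ w = b) then 1 else if (u = b ∧ w = a) then -1 else 0 := by
      intro w hw
      rw [SimpleGraph.mem_neighborFinset] at hw
      by_cases h1 : u = a ∧ w = b
      · obtain ⟨rfl, rfl⟩ := h1
        simp [hxa, hxb, hne]
      · by_cases h2 : u = b ∧ w = a
        · obtain ⟨rfl, rfl⟩ := h2
          simp [hxa, hxb, hne.symm]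
        · rw [if_neg h1, if_neg h2]
          have hedge : G'.Adj u w := by
            rw [hG', SimpleGraph.deleteEdges_adj]
            refine ⟨hw, ?_⟩
            simp only [Set.mem_singleton_iff, Sym2.eq_iff]
            rintro (⟨rfl, rfl⟩ | ⟨rfl, rfl⟩)
            · exact h1 ⟨rfl, rfl⟩
            · exact h2 ⟨rfl, rfl⟩
          rw [hxadj u w hedge, sub_self]
    rw [Finset.sum_congr rfl hterm]
    by_cases hu : u = a
    · subst hu
      rw [Finset.sum_eq_single b]
      · simp [hne]
      · intro w hw hwb
        simp [hwb, hne]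
      · intro hb
        exact absurd ((SimpleGraph.mem_neighborFinset _ _ _).mpr hab) hb
    · by_cases hub : u = b
      · subst hub
        rw [Finset.sum_eq_single a]
        · simp [hne.symm, hu]
        · intro w hw hwa
          simp [hwa, hu]
        · intro ha
          exact absurd ((SimpleGraph.mem_neighborFinset _ _ _).mpr hab.symm) ha
      · rw [Finset.sum_eq_zero]
        · simp [hu, hub]
        · intro w _
          simp [hu, hub]
  -- now compute the quadratic form
  set y : V → ℝ := fun u => (if u = a then (1:ℝ) else 0) - (if u = b then 1 else 0) with hy
  have hswap : ∀ w : V → ℝ, (L *ᵥ x) ⬝ᵥ w = x ⬝ᵥ (L *ᵥ w) := by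
    intro w
    rw [Matrix.dotProduct_mulVec, ← Matrix.mulVec_transpose, hLsymm]
  have key : y ⬝ᵥ (M *ᵥ y) = 1 := by
    have h1 : y ⬝ᵥ (M *ᵥ y) = x ⬝ᵥ ((L * M * L) *ᵥ x) := by
      rw [← hLx, hswap]
      congr 1
      simp [Matrix.mulVec_mulVec, Matrix.mul_assoc]
    rw [h1, hM.1, hLx]
    simp only [dotProduct, hy, mul_sub, mul_ite, mul_one, mul_zero]
    rw [Finset.sum_sub_distrib, Finset.sum_ite_eq' Finset.univ a x,
      Finset.sum_ite_eq' Finset.univ b x]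
    simp [hxa, hxb]
  have hMy : ∀ u, (M *ᵥ y) u = M u a - M u b := by
    intro u
    simp only [Matrix.mulVec, dotProduct, hy, mul_sub, mul_ite, mul_one, mul_zero]
    rw [Finset.sum_sub_distrib, Finset.sum_ite_eq' Finset.univ a (M u),
      Finset.sum_ite_eq' Finset.univ b (M u)]
    simp
  have expand : y ⬝ᵥ (M *ᵥ y) = M a a - M a b - (M b a - M b b) := by
    have h2 : y ⬝ᵥ (M *ᵥ y) = (M *ᵥ y) a - (M *ᵥ y) b := by
      generalize (M *ᵥ y) = w
      simp only [dotProduct, hy, sub_mul, ite_mul, one_mul, zero_mul]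
      rw [Finset.sum_sub_distrib, Finset.sum_ite_eq' Finset.univ a w,
        Finset.sum_ite_eq' Finset.univ b w]
      simp
    rw [h2, hMy a, hMy b]
  have hMab : M b a = M a b := by
    have := congrFun (congrFun hMsymm b) a
    simpa [Matrix.transpose_apply] using this.symm
  rw [expand, hMab] at key
  linarith
end

section
/- Let G be a connected simple graph and {a,b} an edge of G that is not a bridge, i.e., the graph G − {a,b} obtained by removing the edge is still connected. Then the effective resistance of this edge is strictly less than 1: r_G(a,b) = M[a,a] − 2·M[a,b] + M[b,b] < 1 for any Moore–Penrose pseudoinverse M of L_G. -/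
open Matrix BigOperators

/-- Uniqueness of the Moore–Penrose pseudoinverse. -/
lemma moorePenrose_unique {V : Type*} [Fintype V]
    (L M N : Matrix V V ℝ) (hM : IsMoorePenrose L M) (hN : IsMoorePenrose L N) : M = N := by
  obtain ⟨hM1, hM2, hM3, hM4⟩ := hM
  obtain ⟨hN1, hN2, hN3, hN4⟩ := hN
  have hLM : L * M = L * N := by
    calc L * M = (L * M)ᵀ := hM3.symm
    _ = Mᵀ * Lᵀ := by rw [transpose_mul]
    _ = Mᵀ * (L * N * L)ᵀ := by rw [hN1]
    _ = Mᵀ * (Lᵀ * (L * N)ᵀ) := by rw [transpose_mul]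
    _ = Mᵀ * (Lᵀ * (L * N)) := by rw [hN3]
    _ = (Mᵀ * Lᵀ) * (L * N) := by noncomm_ring
    _ = (L * M)ᵀ * (L * N) := by rw [transpose_mul]
    _ = (L * M) * (L * N) := by rw [hM3]
    _ = (L * M * L) * N := by noncomm_ring
    _ = L * N := by rw [hM1]
  have hML : M * L = N * L := by
    calc M * L = (M * L)ᵀ := hM4.symm
    _ = Lᵀ * Mᵀ := by rw [transpose_mul]
    _ = (L * N * L)ᵀ * Mᵀ := by rw [hN1]
    _ = ((N * L)ᵀ * Lᵀ) * Mᵀ := by rw [mul_assoc, transpose_mul]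
    _ = ((N * L) * Lᵀ) * Mᵀ := by rw [hN4]
    _ = (N * L) * (Lᵀ * Mᵀ) := by rw [mul_assoc]
    _ = (N * L) * (M * L)ᵀ := by rw [transpose_mul]
    _ = (N * L) * (M * L) := by rw [hM4]
    _ = N * (L * M * L) := by noncomm_ring
    _ = N * L := by rw [hM1]
  calc M = M * L * M := hM2.symm
  _ = N * L * M := by rw [hML]
  _ = N * (L * M) := by rw [mul_assoc]
  _ = N * (L * N) := by rw [hLM]
  _ = N * L * N := by rw [mul_assoc]
  _ = N := hN2

/-- The Moore–Penrose pseudoinverse of a symmetric matrix is symmetric. -/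
lemma moorePenrose_symm {V : Type*} [Fintype V]
    (L M : Matrix V V ℝ) (hL : Lᵀ = L) (hM : IsMoorePenrose L M) : Mᵀ = M := by
  obtain ⟨h1, h2, h3, h4⟩ := hM
  have e1 : L * Mᵀ = M * L := by
    calc L * Mᵀ = Lᵀ * Mᵀ := by rw [hL]
    _ = (M * L)ᵀ := (transpose_mul M L).symm
    _ = M * L := h4
  have e2 : Mᵀ * L = L * M := by
    calc Mᵀ * L = Mᵀ * Lᵀ := by rw [hL]
    _ = (L * M)ᵀ := (transpose_mul L M).symm
    _ = L * M := h3
  have hMT : IsMoorePenrose L Mᵀ := by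
    refine ⟨?_, ?_, ?_, ?_⟩
    · calc L * Mᵀ * L = Lᵀ * Mᵀ * Lᵀ := by rw [hL]
      _ = (L * (M * L))ᵀ := by simp only [transpose_mul]
      _ = (L * M * L)ᵀ := by rw [← mul_assoc]
      _ = Lᵀ := by rw [h1]
      _ = L := hL
    · calc Mᵀ * L * Mᵀ = Mᵀ * Lᵀ * Mᵀ := by rw [hL]
      _ = (M * (L * M))ᵀ := by simp only [transpose_mul]
      _ = (M * L * M)ᵀ := by rw [← mul_assoc]
      _ = Mᵀ := by rw [h2]
    · rw [e1]; exact h4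
    · rw [e2]; exact h3
  exact (moorePenrose_unique L Mᵀ M hMT ⟨h1, h2, h3, h4⟩)

/-- A vector orthogonal to the kernel of a real symmetric matrix lies in its range. -/
lemma exists_mulVec_eq_of_symm {V : Type*} [Fintype V] [DecidableEq V]
    (A : Matrix V V ℝ) (hA : A.IsHermitian) (v : V → ℝ)
    (hv : ∀ z, A *ᵥ z = 0 → v ⬝ᵥ z = 0) : ∃ y, A *ᵥ y = v := by
  classical
  let T := Matrix.toEuclideanLin A
  have hsym : T.IsSymmetric := Matrix.isHermitian_iff_isSymmetric.mp hA
  have hle : LinearMap.range T ≤ (LinearMap.ker T)ᗮ := by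
    rintro _ ⟨x, rfl⟩
    rw [Submodule.mem_orthogonal]
    intro z hz
    rw [LinearMap.mem_ker] at hz
    rw [← hsym z x, hz, inner_zero_left]
  have heq : LinearMap.range T = (LinearMap.ker T)ᗮ := by
    apply Submodule.eq_of_le_of_finrank_eq hle
    have h1 := LinearMap.finrank_range_add_finrank_ker T
    have h2 := Submodule.finrank_add_finrank_orthogonal (K := LinearMap.ker T)
    omega
  have hker : ∀ z : EuclideanSpace ℝ V, z ∈ LinearMap.ker T →
      A *ᵥ (WithLp.equiv 2 (V → ℝ) z) = 0 := by
    intro z hz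
    rw [LinearMap.mem_ker] at hz
    have := congrArg (WithLp.equiv 2 (V → ℝ)) hz
    exact this
  have hvmem : (WithLp.equiv 2 (V → ℝ)).symm v ∈ (LinearMap.ker T)ᗮ := by
    rw [Submodule.mem_orthogonal]
    intro z hz
    have h0 := hv _ (hker z hz)
    rw [real_inner_comm]
    simpa [PiLp.inner_apply, dotProduct, mul_comm] using h0
  rw [← heq] at hvmem
  obtain ⟨y, hy⟩ := hvmem
  refine ⟨WithLp.equiv 2 (V → ℝ) y, ?_⟩
  have := congrArg (WithLp.equiv 2 (V → ℝ)) hy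
  exact this

/-- Deleting an edge subtracts a rank-one term from the Laplacian. -/
lemma lap_delete_edge {V : Type*} [Fintype V] [DecidableEq V]
    (G : SimpleGraph V) [DecidableRel G.Adj] (a b : V) (hab : G.Adj a b) :
    G.lapMatrix ℝ = (G.deleteEdges {s(a, b)}).lapMatrix ℝ +
      vecMulVec (Pi.single a 1 - Pi.single b 1) (Pi.single a 1 - Pi.single b 1) := by
  classical
  have hne : a ≠ b := hab.ne
  have hadj : ∀ i j : V, (if (G.deleteEdges {s(a,b)}).Adj i j then (1:ℝ) else 0) =
      (if G.Adj i j then 1 else 0) - (if (i=a∧j=b)∨(i=b∧j=a) then 1 else 0) := by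
    intro i j
    have hs : (s(i,j) : Sym2 V) = s(a,b) ↔ (i=a∧j=b)∨(i=b∧j=a) := by
      rw [Sym2.eq_iff]
    by_cases h2 : (i=a∧j=b)∨(i=b∧j=a)
    · have h1 : G.Adj i j := by
        rcases h2 with ⟨hh1, hh2⟩ | ⟨hh1, hh2⟩ <;> subst hh1 <;> subst hh2
        · exact hab
        · exact hab.symm
      simp [SimpleGraph.deleteEdges_adj, h1, h2, hs]
    · by_cases h1 : G.Adj i j <;>
        simp [SimpleGraph.deleteEdges_adj, h1, h2, hs]
  have hdeg : ∀ v : V, ((G.deleteEdges {s(a,b)}).degree v : ℝ) =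
      (G.degree v : ℝ) - (if v = a then 1 else 0) - (if v = b then 1 else 0) := by
    intro v
    rw [SimpleGraph.degree_eq_sum_if_adj, SimpleGraph.degree_eq_sum_if_adj]
    simp_rw [hadj]
    rw [Finset.sum_sub_distrib]
    have hsum : (∑ x : V, if (v=a∧x=b)∨(v=b∧x=a) then (1:ℝ) else 0) =
        (if v = a then 1 else 0) + (if v = b then 1 else 0) := by
      by_cases hva : v = a
      · have hvb : v ≠ b := by rw [hva]; exact hne
        have hx : ∀ x : V, (if (v=a∧x=b)∨(v=b∧x=a) then (1:ℝ) else 0) =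
            if x = b then 1 else 0 := by
          intro x; simp [hva, hvb, hne, Ne.symm hne]
        simp_rw [hx]
        simp [hva, hvb, hne, Ne.symm hne]
      · by_cases hvb : v = b
        · have hx : ∀ x : V, (if (v=a∧x=b)∨(v=b∧x=a) then (1:ℝ) else 0) =
              if x = a then 1 else 0 := by
            intro x; simp [hva, hvb, hne, Ne.symm hne]
          simp_rw [hx]
          simp [hva, hvb, hne, Ne.symm hne]
        · have hx : ∀ x : V, (if (v=a∧x=b)∨(v=b∧x=a) then (1:ℝ) else 0) = 0 := by
            intro x; simp [hva, hvb, hne, Ne.symm hne]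
          simp_rw [hx]
          simp [hva, hvb, hne, Ne.symm hne]
    rw [hsum]; ring
  ext i j
  simp only [SimpleGraph.lapMatrix, SimpleGraph.degMatrix, Matrix.sub_apply, Matrix.add_apply,
    Matrix.diagonal_apply, SimpleGraph.adjMatrix_apply, vecMulVec_apply, Pi.sub_apply]
  rw [hadj i j]
  simp_rw [hdeg]
  simp only [Pi.single_apply]
  clear hadj
  clear hdeg
  split_ifs
  any_goals ring
  all_goals exfalso
  all_goals subst_vars
  all_goals simp_all

theorem non_bridge_effective_resistance_lt_one {V : Type*} [Fintype V] [DecidableEq V]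
    (G : SimpleGraph V) [DecidableRel G.Adj] (hG : G.Connected)
    (a b : V) (hab : G.Adj a b) (hnb : (G.deleteEdges {s(a, b)}).Connected)
    (M : Matrix V V ℝ) (hM : IsMoorePenrose (G.lapMatrix ℝ) M) :
    M a a - 2 * M a b + M b b < 1 := by
  classical
  set L := G.lapMatrix ℝ with hLdef
  set L' := (G.deleteEdges {s(a, b)}).lapMatrix ℝ with hL'def
  set x : V → ℝ := Pi.single a 1 - Pi.single b 1 with hxdef
  have hLsym : Lᵀ = L := G.isSymm_lapMatrix (R := ℝ)
  have hMsymm : Mᵀ = M := moorePenrose_symm L M hLsym hM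
  have hMba : M b a = M a b := by
    have := congrFun (congrFun hMsymm a) b
    simpa [Matrix.transpose_apply] using this
  have hdot : ∀ w : V → ℝ, x ⬝ᵥ w = w a - w b := by
    intro w
    simp [hxdef, dotProduct, Pi.sub_apply, Pi.single_apply, sub_mul, ite_mul, one_mul, zero_mul,
      Finset.sum_sub_distrib]
  have hmv : ∀ v : V, (M *ᵥ x) v = M v a - M v b := by
    intro v
    simp [hxdef, mulVec, dotProduct, Pi.sub_apply, Pi.single_apply, mul_sub, mul_ite, mul_one,
      mul_zero, Finset.sum_sub_distrib]
  have hquad : M a a - 2 * M a b + M b b = x ⬝ᵥ (M *ᵥ x) := by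
    rw [hdot, hmv, hmv, hMba]; ring
  -- decompose the Laplacian
  have hL : L = L' + vecMulVec x x := lap_delete_edge G a b hab
  -- find y with L' y = x
  obtain ⟨y, hy⟩ : ∃ y, L' *ᵥ y = x := by
    apply exists_mulVec_eq_of_symm L'
      (SimpleGraph.posSemidef_lapMatrix ℝ (G.deleteEdges {s(a, b)})).1
    intro z hz
    have hreach := (SimpleGraph.lapMatrix_mulVec_eq_zero_iff_forall_reachable
      (G.deleteEdges {s(a, b)})).mp hz
    have hzab : z a = z b := hreach a b (hnb.preconnected a b)
    rw [hdot, hzab, sub_self]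
  set c : ℝ := x ⬝ᵥ y with hcdef
  have hc : 0 ≤ c := by
    have h0 := (SimpleGraph.posSemidef_lapMatrix ℝ (G.deleteEdges {s(a, b)})).dotProduct_mulVec_nonneg y
    rw [hcdef, ← hy, dotProduct_comm]
    simpa using h0
  have h1c : (0:ℝ) < 1 + c := by linarith
  have hvv : (vecMulVec x x) *ᵥ y = c • x := by
    ext i
    simp only [mulVec, dotProduct, vecMulVec_apply, Pi.smul_apply, smul_eq_mul, hcdef]
    rw [Finset.sum_mul]
    exact Finset.sum_congr rfl fun j _ => by ring
  have hLy : L *ᵥ y = (1 + c) • x := by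
    rw [hL, add_mulVec, hy, hvv, add_smul, one_smul]
  set u : V → ℝ := (1 + c)⁻¹ • y with hudef
  have hLu : L *ᵥ u = x := by
    rw [hudef, Matrix.mulVec_smul, hLy, smul_smul, inv_mul_cancel₀ h1c.ne', one_smul]
  have key : x ⬝ᵥ (M *ᵥ x) = u ⬝ᵥ x := by
    conv_lhs => rw [← hLu]
    rw [Matrix.mulVec_mulVec]
    calc (L *ᵥ u) ⬝ᵥ ((M * L) *ᵥ u)
        = ((M * L) *ᵥ u) ⬝ᵥ (L *ᵥ u) := dotProduct_comm _ _
    _ = (((M * L) *ᵥ u) ᵥ* L) ⬝ᵥ u := by rw [dotProduct_mulVec]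
    _ = (Lᵀ *ᵥ ((M * L) *ᵥ u)) ⬝ᵥ u := by rw [Matrix.mulVec_transpose]
    _ = (L *ᵥ ((M * L) *ᵥ u)) ⬝ᵥ u := by rw [hLsym]
    _ = ((L * (M * L)) *ᵥ u) ⬝ᵥ u := by rw [Matrix.mulVec_mulVec]
    _ = ((L * M * L) *ᵥ u) ⬝ᵥ u := by rw [mul_assoc]
    _ = (L *ᵥ u) ⬝ᵥ u := by rw [hM.1]
    _ = x ⬝ᵥ u := by rw [hLu]
    _ = u ⬝ᵥ x := dotProduct_comm _ _
  have hux : u ⬝ᵥ x = (1 + c)⁻¹ * c := by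
    rw [hudef, smul_dotProduct, smul_eq_mul, dotProduct_comm, ← hcdef]
  rw [hquad, key, hux]
  rw [inv_mul_eq_div, div_lt_one h1c]
  linarith
end
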